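/- Let z₀ ∈ ℂ \ {0} and κ₁ ∈ ℂ with κ₁ ≠ z₀³/3, and set κ₂ = −(z₀⁶ − 15κ₁z₀³ − 45κ₁²)/(45z₀) and κ₃ = −(z₀⁹ − 189κ₁²z₀³ − 189κ₁³)/(189z₀²). Then z₀ is a root of the Adler–Moser polynomial Θ₄(z) with parameters (κ₁,κ₂,κ₃) of multiplicity exactly 3; in particular, the third derivative satisfies Θ₄⁗′(z₀) = Θ₄^{(3)}(z₀) ≠ 0. -/

import Mathlib

open Complex

/-- The Adler–Moser polynomial
`Θ₄(z) = z¹⁰ − 45κ₁z⁷ + 315κ₂z⁵ − 1575κ₃z³ + 4725κ₁κ₂z² − 4725κ₁³z − 4725κ₂² + 4725κ₁κ₃`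
as a function of `z`. -/
noncomputable def theta4 (κ₁ κ₂ κ₃ : ℂ) : ℂ → ℂ := fun z =>
  z ^ 10 - 45 * κ₁ * z ^ 7 + 315 * κ₂ * z ^ 5 - 1575 * κ₃ * z ^ 3
    + 4725 * κ₁ * κ₂ * z ^ 2 - 4725 * κ₁ ^ 3 * z - 4725 * κ₂ ^ 2 + 4725 * κ₁ * κ₃

lemma d1 (κ₁ κ₂ κ₃ : ℂ) : deriv (theta4 κ₁ κ₂ κ₃) = fun z =>
    10 * z ^ 9 - 315 * κ₁ * z ^ 6 + 1575 * κ₂ * z ^ 4 - 4725 * κ₃ * z ^ 2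
      + 9450 * κ₁ * κ₂ * z - 4725 * κ₁ ^ 3 := by
  funext z
  have h : HasDerivAt (theta4 κ₁ κ₂ κ₃)
      (10 * z ^ 9 - 315 * κ₁ * z ^ 6 + 1575 * κ₂ * z ^ 4 - 4725 * κ₃ * z ^ 2
        + 9450 * κ₁ * κ₂ * z - 4725 * κ₁ ^ 3) z := by
    have h0 := (((((((hasDerivAt_pow 10 z).sub
      (((hasDerivAt_pow 7 z).const_mul (45 * κ₁)))).add
      ((hasDerivAt_pow 5 z).const_mul (315 * κ₂))).sub
      ((hasDerivAt_pow 3 z).const_mul (1575 * κ₃))).add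
      ((hasDerivAt_pow 2 z).const_mul (4725 * κ₁ * κ₂))).sub
      ((hasDerivAt_id z).const_mul (4725 * κ₁ ^ 3))).sub
      (hasDerivAt_const z (4725 * κ₂ ^ 2))).add (hasDerivAt_const z (4725 * κ₁ * κ₃))
    refine h0.congr_deriv ?_
    push_cast; ring
  exact h.deriv

lemma d2 (κ₁ κ₂ κ₃ : ℂ) : deriv (deriv (theta4 κ₁ κ₂ κ₃)) = fun z =>
    90 * z ^ 8 - 1890 * κ₁ * z ^ 5 + 6300 * κ₂ * z ^ 3 - 9450 * κ₃ * z
      + 9450 * κ₁ * κ₂ := by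
  rw [d1]; funext z
  have h : HasDerivAt (fun z : ℂ =>
      10 * z ^ 9 - 315 * κ₁ * z ^ 6 + 1575 * κ₂ * z ^ 4 - 4725 * κ₃ * z ^ 2
        + 9450 * κ₁ * κ₂ * z - 4725 * κ₁ ^ 3)
      (90 * z ^ 8 - 1890 * κ₁ * z ^ 5 + 6300 * κ₂ * z ^ 3 - 9450 * κ₃ * z
        + 9450 * κ₁ * κ₂) z := by
    have h0 := ((((((hasDerivAt_pow 9 z).const_mul (10:ℂ)).sub
      ((hasDerivAt_pow 6 z).const_mul (315 * κ₁))).add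
      ((hasDerivAt_pow 4 z).const_mul (1575 * κ₂))).sub
      ((hasDerivAt_pow 2 z).const_mul (4725 * κ₃))).add
      ((hasDerivAt_id z).const_mul (9450 * κ₁ * κ₂))).sub
      (hasDerivAt_const z (4725 * κ₁ ^ 3))
    refine h0.congr_deriv ?_
    push_cast; ring
  exact h.deriv

lemma d3 (κ₁ κ₂ κ₃ : ℂ) : deriv (deriv (deriv (theta4 κ₁ κ₂ κ₃))) = fun z =>
    720 * z ^ 7 - 9450 * κ₁ * z ^ 4 + 18900 * κ₂ * z ^ 2 - 9450 * κ₃ := by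
  rw [d2]; funext z
  have h : HasDerivAt (fun z : ℂ =>
      90 * z ^ 8 - 1890 * κ₁ * z ^ 5 + 6300 * κ₂ * z ^ 3 - 9450 * κ₃ * z
        + 9450 * κ₁ * κ₂)
      (720 * z ^ 7 - 9450 * κ₁ * z ^ 4 + 18900 * κ₂ * z ^ 2 - 9450 * κ₃) z := by
    have h0 := (((((hasDerivAt_pow 8 z).const_mul (90:ℂ)).sub
      ((hasDerivAt_pow 5 z).const_mul (1890 * κ₁))).add
      ((hasDerivAt_pow 3 z).const_mul (6300 * κ₂))).sub
      ((hasDerivAt_id z).const_mul (9450 * κ₃))).add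
      (hasDerivAt_const z (9450 * κ₁ * κ₂))
    refine h0.congr_deriv ?_
    push_cast; ring
  exact h.deriv

/-- **For `z₀ ≠ 0`, `κ₁ ≠ z₀³/3`, and the choice of `κ₂, κ₃` of Eq. (2.21), `z₀` is a
root of multiplicity exactly 3 of `Θ₄`:** the derivatives of order `< 3` vanish at `z₀`
and the third derivative `Θ₄^{(3)}(z₀) ≠ 0`. -/
theorem theta4_exact_triple_root (z₀ : ℂ) (hz₀ : z₀ ≠ 0) (κ₁ κ₂ κ₃ : ℂ)
    (hκ₁ : κ₁ ≠ z₀ ^ 3 / 3)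
    (hκ₂ : κ₂ = -(z₀ ^ 6 - 15 * κ₁ * z₀ ^ 3 - 45 * κ₁ ^ 2) / (45 * z₀))
    (hκ₃ : κ₃ = -(z₀ ^ 9 - 189 * κ₁ ^ 2 * z₀ ^ 3 - 189 * κ₁ ^ 3) / (189 * z₀ ^ 2)) :
    (∀ k < 3, iteratedDeriv k (theta4 κ₁ κ₂ κ₃) z₀ = 0) ∧
      iteratedDeriv 3 (theta4 κ₁ κ₂ κ₃) z₀ ≠ 0 := by
  have hκ : z₀ ^ 3 - 3 * κ₁ ≠ 0 := by
    intro h; apply hκ₁; field_simp; linear_combination -h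
  have e2 : 45 * z₀ * κ₂ = -(z₀ ^ 6 - 15 * κ₁ * z₀ ^ 3 - 45 * κ₁ ^ 2) := by
    rw [hκ₂]; field_simp
  have e3 : 189 * z₀ ^ 2 * κ₃ = -(z₀ ^ 9 - 189 * κ₁ ^ 2 * z₀ ^ 3 - 189 * κ₁ ^ 3) := by
    rw [hκ₃]; field_simp
  constructor
  · intro k hk
    interval_cases k
    · rw [iteratedDeriv_zero]
      have g0 : theta4 κ₁ κ₂ κ₃ z₀ * z₀ ^ 2 = 0 := by
        unfold theta4
        linear_combination (7 * z₀ ^ 6 + 105 * κ₁ * z₀ ^ 3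
            - (7/3) * (45 * z₀ * κ₂ - (z₀ ^ 6 - 15 * κ₁ * z₀ ^ 3 - 45 * κ₁ ^ 2))) * e2
          + (25 * κ₁ - (25/3) * z₀ ^ 3) * e3
      exact (mul_eq_zero.mp g0).resolve_right (pow_ne_zero _ hz₀)
    · rw [iteratedDeriv_one, d1]
      show 10 * z₀ ^ 9 - 315 * κ₁ * z₀ ^ 6 + 1575 * κ₂ * z₀ ^ 4 - 4725 * κ₃ * z₀ ^ 2
        + 9450 * κ₁ * κ₂ * z₀ - 4725 * κ₁ ^ 3 = 0
      linear_combination (35 * z₀ ^ 3 + 210 * κ₁) * e2 + (-25) * e3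
    · rw [show (2:ℕ) = 1 + 1 from rfl, iteratedDeriv_succ, iteratedDeriv_one, d2]
      have g2 : (90 * z₀ ^ 8 - 1890 * κ₁ * z₀ ^ 5 + 6300 * κ₂ * z₀ ^ 3 - 9450 * κ₃ * z₀
          + 9450 * κ₁ * κ₂) * z₀ = 0 := by
        linear_combination (140 * z₀ ^ 3 + 210 * κ₁) * e2 + (-50) * e3
      exact (mul_eq_zero.mp g2).resolve_right hz₀
  · rw [show (3:ℕ) = 2 + 1 from rfl, iteratedDeriv_succ,
      show (2:ℕ) = 1 + 1 from rfl, iteratedDeriv_succ, iteratedDeriv_one, d3]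
    show ¬ (720 * z₀ ^ 7 - 9450 * κ₁ * z₀ ^ 4 + 18900 * κ₂ * z₀ ^ 2 - 9450 * κ₃ = 0)
    intro h
    have g3 : (720 * z₀ ^ 7 - 9450 * κ₁ * z₀ ^ 4 + 18900 * κ₂ * z₀ ^ 2 - 9450 * κ₃) * z₀ ^ 2
        = 350 * (z₀ ^ 3 - 3 * κ₁) ^ 3 := by
      linear_combination 420 * z₀ ^ 3 * e2 + (-50) * e3
    rw [h, zero_mul] at g3
    exact pow_ne_zero 3 hκ (by linear_combination -g3 / 350)
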